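/- Let K ⊊ L be a field extension with [L : K] = n finite, #K ≥ 5, and no intermediate field M with K ⊊ M ⊊ L. Then for every natural number m with 1 ≤ m ≤ (n+1)/4, the extension K ⊆ L fails to have the linear acyclic matching property at order m. -/

import Mathlib

section
variable {K L : Type*} [Field K] [Field L] [Algebra K L]

/-- A basis `v` of `A` is matched to a basis `w` of `B` if for every `b ∈ B` and
every `i`, `v i * b ∈ A` implies that `b` lies in the span of `w j`, `j ≠ i`. -/
def BasesMatched {n : ℕ} {A B : Submodule K L}
    (v : Module.Basis (Fin n) K A) (w : Module.Basis (Fin n) K B) : Prop :=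
  ∀ (b : B) (i : Fin n), (v i : L) * (b : L) ∈ A →
    b ∈ Submodule.span K (⇑w '' {j : Fin n | j ≠ i})

/-- `A` is matched with `B` if every basis of `A` can be matched to a basis of `B`. -/
def SubspaceMatched (n : ℕ) (A B : Submodule K L) : Prop :=
  ∀ v : Module.Basis (Fin n) K A, ∃ w : Module.Basis (Fin n) K B, BasesMatched v w

/-- The extension `K ⊆ L` has the linear matching property if for every `n ≥ 1` and
all `n`-dimensional subspaces `A`, `B` of `L` with `1 ∉ B`, `A` is matched with `B`. -/
def HasLinearMatchingProperty (K L : Type*) [Field K] [Field L] [Algebra K L] : Prop :=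
  ∀ n : ℕ, 1 ≤ n → ∀ A B : Submodule K L,
    Module.finrank K A = n → Module.finrank K B = n → (1 : L) ∉ B →
    SubspaceMatched n A B

/-- A strong matching from `A` to `B` is a linear isomorphism `φ : A → B` such that
every basis `v` of `A` is matched to the basis `φ ∘ v` of `B`. -/
def IsStrongMatching (n : ℕ) (A B : Submodule K L) (φ : A ≃ₗ[K] B) : Prop :=
  ∀ v : Module.Basis (Fin n) K A, BasesMatched v (v.map φ)

/-- Two strong matchings `f, g : A → B` are equivalent if there is a linear
isomorphism `φ : A → A` with `a * f a = φ a * g (φ a)` for all `a ∈ A`. -/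
def EquivStrongMatchings {A B : Submodule K L} (f g : A ≃ₗ[K] B) : Prop :=
  ∃ φ : A ≃ₗ[K] A, ∀ a : A, (a : L) * (f a : L) = (φ a : L) * (g (φ a) : L)

end

/-- The extension `K ⊆ L` fails to have the linear acyclic matching property at
order `m` if there are `m`-dimensional subspaces `A`, `B` of `L` and strong
matchings `f ≠ g` from `A` to `B` with `f ∼ g`. -/
def FailsLinearAcyclicAt (K L : Type*) [Field K] [Field L] [Algebra K L] (m : ℕ) : Prop :=
  ∃ (A B : Submodule K L) (f g : A ≃ₗ[K] B),
    Module.finrank K A = m ∧ Module.finrank K B = m ∧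
    IsStrongMatching m A B f ∧ IsStrongMatching m A B g ∧
    f ≠ g ∧ EquivStrongMatchings f g

open IntermediateField in
/-- Let `K ⊊ L` be a finite extension of degree `n` with `#K ≥ 5` and no proper
intermediate field. Then for every `m` with `1 ≤ m ≤ (n+1)/4`, the extension fails
to have the linear acyclic matching property at order `m`. -/
theorem stmt15 (K L : Type*) [Field K] [Field L] [Algebra K L]
    [FiniteDimensional K L] (n : ℕ) (hn : Module.finrank K L = n)
    (hproper : 1 < n) (hK : 5 ≤ Cardinal.mk K)
    (hnomid : ∀ M : IntermediateField K L, M = ⊥ ∨ M = ⊤) :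
    ∀ m : ℕ, 1 ≤ m → m ≤ (n + 1) / 4 → FailsLinearAcyclicAt K L m := by
  intro m hm1 hm4
  have hm4' : m * 4 ≤ n + 1 := (Nat.le_div_iff_mul_le (by norm_num)).mp hm4
  -- find an element outside K
  obtain ⟨x, hx⟩ : ∃ x : L, x ∉ (⊥ : IntermediateField K L) := by
    by_contra h
    push_neg at h
    have hbt : (⊥ : IntermediateField K L) = ⊤ :=
      SetLike.ext fun y => ⟨fun _ => IntermediateField.mem_top, fun _ => h y⟩
    have h1 : Module.finrank K (⊥ : IntermediateField K L) = 1 :=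
      IntermediateField.finrank_bot
    rw [hbt, IntermediateField.finrank_top', hn] at h1
    omega
  have hx0 : x ≠ 0 := fun h => hx (h ▸ zero_mem _)
  have hxint : IsIntegral K x := IsIntegral.of_finite K x
  have hadj : K⟮x⟯ = ⊤ := by
    rcases hnomid K⟮x⟯ with h | h
    · exact absurd (h ▸ IntermediateField.mem_adjoin_simple_self K x) hx
    · exact h
  have hdeg : (minpoly K x).natDegree = n := by
    have h1 := IntermediateField.adjoin.finrank hxint
    rw [hadj, IntermediateField.finrank_top', hn] at h1
    omega
  have hli : LinearIndependent K fun i : Fin n => x ^ (i : ℕ) := by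
    have := linearIndependent_pow (K := K) x
    rwa [hdeg] at this
  set e : Fin n → L := fun i => x ^ (i : ℕ) with he
  set vA : Fin m → L := fun i => x ^ (i : ℕ) with hvA
  set vB : Fin m → L := fun i => x ^ (m + (i : ℕ)) with hvB
  have liA : LinearIndependent K vA := by
    have : vA = e ∘ (fun i : Fin m => (⟨(i : ℕ), by omega⟩ : Fin n)) := rfl
    rw [this]
    exact hli.comp _ (fun i j h => by
      have h2 := congrArg Fin.val h
      exact Fin.ext h2)
  have liB : LinearIndependent K vB := by
    have : vB = e ∘ (fun i : Fin m => (⟨m + (i : ℕ), by omega⟩ : Fin n)) := rfl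
    rw [this]
    exact hli.comp _ (fun i j h => by
      have : m + (i : ℕ) = m + (j : ℕ) := congrArg Fin.val h
      exact Fin.ext (by omega))
  set A : Submodule K L := Submodule.span K (Set.range vA) with hA
  set B : Submodule K L := Submodule.span K (Set.range vB) with hB
  set C : Submodule K L := Submodule.span K (e '' {i : Fin n | m ≤ (i : ℕ)}) with hC
  have hAS : Set.range vA = e '' {i : Fin n | (i : ℕ) < m} := by
    ext y
    constructor
    · rintro ⟨i, rfl⟩
      exact ⟨⟨(i : ℕ), by omega⟩, i.isLt, rfl⟩
    · rintro ⟨i, hi, rfl⟩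
      exact ⟨⟨(i : ℕ), hi⟩, rfl⟩
  have hdisj : Disjoint A C := by
    rw [hA, hAS, hC]
    exact hli.disjoint_span_image (by
      rw [Set.disjoint_left]
      intro i hi hi'
      simp only [Set.mem_setOf_eq] at hi hi'
      omega)
  have hmulAB : ∀ a ∈ A, ∀ b ∈ B, a * b ∈ C := by
    intro a ha
    induction ha using Submodule.span_induction with
    | mem y hy =>
      obtain ⟨i, rfl⟩ := hy
      intro b hb
      induction hb using Submodule.span_induction with
      | mem z hz =>
        obtain ⟨j, rfl⟩ := hz
        refine Submodule.subset_span ⟨⟨m + ((i : ℕ) + (j : ℕ)), by omega⟩, by simp, ?_⟩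
        show x ^ (m + ((i : ℕ) + (j : ℕ))) = _
        rw [hvA, hvB]
        ring
      | zero => rw [mul_zero]; exact zero_mem _
      | add u v _ _ hu hv => rw [mul_add]; exact add_mem hu hv
      | smul c u _ hu => rw [mul_smul_comm]; exact Submodule.smul_mem _ _ hu
    | zero => intro b _; rw [zero_mul]; exact zero_mem _
    | add u v _ _ hu hv =>
      intro b hb
      rw [add_mul]; exact add_mem (hu b hb) (hv b hb)
    | smul c u _ hu =>
      intro b hb
      rw [smul_mul_assoc]; exact Submodule.smul_mem _ _ (hu b hb)
  have key : ∀ a b : L, a ∈ A → b ∈ B → a ≠ 0 → a * b ∈ A → b = 0 := by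
    intro a b ha hb ha0 hab
    have h0 : a * b = 0 :=
      Submodule.disjoint_def.mp hdisj _ hab (hmulAB a ha b hb)
    rcases mul_eq_zero.mp h0 with h | h
    · exact absurd h ha0
    · exact h
  -- any linear iso A ≃ B is a strong matching
  have strong : ∀ ψ : A ≃ₗ[K] B, IsStrongMatching m A B ψ := by
    intro ψ v b i hib
    have hvi : ((v i : A) : L) ≠ 0 := by
      intro h
      exact v.ne_zero i (Subtype.ext h)
    have hb0 : (b : L) = 0 := key _ _ (v i).2 b.2 hvi hib
    have : b = 0 := Subtype.ext hb0
    rw [this]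
    exact zero_mem _
  -- the multiplication-by-x^m isomorphism
  have hxm0 : x ^ m ≠ 0 := pow_ne_zero _ hx0
  set μ : L →ₗ[K] L := LinearMap.mulLeft K (x ^ m) with hμ
  have hinj : Function.Injective μ := mul_right_injective₀ hxm0
  have hmap : Submodule.map μ A = B := by
    rw [hA, Submodule.map_span, hB, ← Set.range_comp]
    have hco : ⇑μ ∘ vA = vB := by
      funext i
      show x ^ m * x ^ (i : ℕ) = x ^ (m + (i : ℕ))
      rw [pow_add]
    rw [hco]
  set f : A ≃ₗ[K] B :=
    (Submodule.equivMapOfInjective μ hinj A).trans (LinearEquiv.ofEq _ _ hmap) with hf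
  have hfa : ∀ a : A, (f a : L) = x ^ m * (a : L) := fun a => rfl
  -- choose d with d ≠ 0 and d*d ≠ 1
  obtain ⟨d, hd0, hd1⟩ : ∃ d : K, d ≠ 0 ∧ d * d ≠ 1 := by
    by_contra h
    push_neg at h
    have hsub : (Set.univ : Set K) ⊆ ({0, 1, -1} : Set K) := by
      intro d _
      by_cases hd : d = 0
      · exact Or.inl hd
      · rcases mul_self_eq_one_iff.mp (h d hd) with h1 | h1
        · exact Or.inr (Or.inl h1)
        · exact Or.inr (Or.inr h1)
    have h3 : Cardinal.mk K ≤ 3 := by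
      calc Cardinal.mk K = Cardinal.mk (Set.univ : Set K) := Cardinal.mk_univ.symm
        _ ≤ Cardinal.mk ({0, 1, -1} : Set K) := Cardinal.mk_le_mk_of_subset hsub
        _ ≤ Cardinal.mk ({1, -1} : Set K) + 1 := Cardinal.mk_insert_le
        _ ≤ Cardinal.mk ({-1} : Set K) + 1 + 1 :=
          add_le_add_left Cardinal.mk_insert_le _
        _ = 3 := by rw [Cardinal.mk_singleton]; norm_num
    have : (5 : Cardinal) ≤ 3 := le_trans hK h3
    norm_num at this
  set c : K := (d * d)⁻¹ with hc
  have hdd0 : d * d ≠ 0 := mul_ne_zero hd0 hd0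
  have hc0 : c ≠ 0 := inv_ne_zero hdd0
  have hc1 : c ≠ 1 := by
    intro h
    exact hd1 (by rw [← inv_inv (d * d), ← hc, h, inv_one])
  set g : A ≃ₗ[K] B := f.trans (LinearEquiv.smulOfNeZero K B c hc0) with hg
  have hga : ∀ a : A, (g a : L) = c • (x ^ m * (a : L)) := by
    intro a
    show ((c • f a : B) : L) = _
    rw [Submodule.coe_smul, hfa]
  have h1A : (1 : L) ∈ A := Submodule.subset_span ⟨⟨0, by omega⟩, by simp [hvA]⟩
  have hfg : f ≠ g := by
    intro h
    set a₀ : A := ⟨1, h1A⟩ with ha₀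
    have : (f a₀ : L) = (g a₀ : L) := by rw [h]
    rw [hfa, hga] at this
    simp only [ha₀, Submodule.coe_mk, mul_one] at this
    have : c • x ^ m = (1 : K) • x ^ m := by rw [one_smul, ← this]
    exact hc1 (smul_left_injective K hxm0 this)
  refine ⟨A, B, f, g, ?_, ?_, strong f, strong g, hfg, ?_⟩
  · rw [hA, finrank_span_eq_card liA, Fintype.card_fin]
  · rw [hB, finrank_span_eq_card liB, Fintype.card_fin]
  · refine ⟨LinearEquiv.smulOfNeZero K A d hd0, fun a => ?_⟩
    have hφ : ((LinearEquiv.smulOfNeZero K A d hd0) a : L) = d • (a : L) := by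
      show ((d • a : A) : L) = _
      rw [Submodule.coe_smul]
    rw [hφ, hfa, hga, hφ]
    simp only [Algebra.smul_def]
    have hone : (algebraMap K L) c * ((algebraMap K L) d * (algebraMap K L) d) = 1 := by
      rw [← map_mul, ← map_mul, hc, inv_mul_cancel₀ hdd0, map_one]
    linear_combination (-((a : L) * (a : L) * x ^ m)) * hone
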